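/- Assume additionally that e(g₁, g₂) has order q in G_T. Let x, v, b ∈ ZMod q with b ≠ 0, and let σ̃ := g₁^b (the blinding of the fake signature g₁). Then e(σ̃, g₂^x) = e(g₁, g₂)^b · e(σ̃, g₂)^{−v} holds if and only if x + v = 1. In particular, whenever x + v ≠ 1 the verification equation for the blinded fake signature fails. -/
import Mathlib

/-- For the blinded fake signature `σ̃ = g₁^b`, the blinded Boneh–Boyen
verification equation for value `v` holds iff `x + v = 1`; in particular
it fails whenever `x + v ≠ 1`. -/
theorem blinded_fake_boneh_boyen_verification_iff
    {q : ℕ} (hq : q.Prime)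
    {G₁ G₂ GT : Type*} [CommGroup G₁] [CommGroup G₂] [CommGroup GT]
    (hG₁ : ∀ x : G₁, x ^ q = 1) (hG₂ : ∀ x : G₂, x ^ q = 1)
    (hGT : ∀ x : GT, x ^ q = 1)
    (g₁ h₁ f₁ : G₁) (g₂ f₂ : G₂)
    (e : G₁ → G₂ → GT)
    (he_left : ∀ (a a' : G₁) (b : G₂), e (a * a') b = e a b * e a' b)
    (he_right : ∀ (a : G₁) (b b' : G₂), e a (b * b') = e a b * e a b')
    (horder : orderOf (e g₁ g₂) = q)
    (x v b : ZMod q) (hb : b ≠ 0) :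
    e (g₁ ^ b.val) (g₂ ^ x.val) =
      (e g₁ g₂) ^ b.val * (e (g₁ ^ b.val) g₂) ^ (-v).val
      ↔ x + v = 1 := by
  haveI : Fact q.Prime := ⟨hq⟩
  have hone_left : ∀ c : G₂, e 1 c = 1 := by
    intro c
    have h := he_left 1 1 c
    rw [one_mul] at h
    exact (left_eq_mul.mp h)
  have hone_right : ∀ a : G₁, e a 1 = 1 := by
    intro a
    have h := he_right a 1 1
    rw [one_mul] at h
    exact (left_eq_mul.mp h)
  have hpow_left : ∀ (a : G₁) (c : G₂) (n : ℕ), e (a ^ n) c = (e a c) ^ n := by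
    intro a c n
    induction n with
    | zero => simpa using hone_left c
    | succ n ih => rw [pow_succ, he_left, ih, pow_succ]
  have hpow_right : ∀ (a : G₁) (c : G₂) (n : ℕ), e a (c ^ n) = (e a c) ^ n := by
    intro a c n
    induction n with
    | zero => simpa using hone_right a
    | succ n ih => rw [pow_succ, he_right, ih, pow_succ]
  set T := e g₁ g₂ with hT
  have key : ∀ n m : ℕ, e (g₁ ^ n) (g₂ ^ m) = T ^ (n * m) := by
    intro n m
    rw [hpow_left, hpow_right, ← pow_mul, Nat.mul_comm m n]
  have lhs : e (g₁ ^ b.val) (g₂ ^ x.val) = T ^ (b.val * x.val) := key _ _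
  have rhs : (e (g₁ ^ b.val) g₂) ^ (-v).val = T ^ (b.val * (-v).val) := by
    rw [hpow_left, ← pow_mul]
  rw [lhs, rhs, ← pow_add, pow_eq_pow_iff_modEq, horder,
    ← ZMod.natCast_eq_natCast_iff]
  push_cast [ZMod.natCast_val, ZMod.cast_id]
  constructor
  · intro h
    have h2 : b * (x + v) = b * 1 := by ring_nf; ring_nf at h; linear_combination h
    exact mul_left_cancel₀ hb h2
  · intro h
    linear_combination b * h
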